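/- If f : ℝⁿ → ℝ is μ-strongly convex and differentiable with L-Lipschitz gradient, then for any step size 0 < t ≤ 1/L, one gradient descent step uᵏ⁺¹ = uᵏ − t∇f(uᵏ) satisfies ‖uᵏ⁺¹ − u*‖² ≤ (1 − tμ)‖uᵏ − u*‖², where u* is the unique minimizer of f. -/

import Mathlib

open RealInnerProductSpace

section aux

variable {n : ℕ}

lemma line_hasDerivAt (f : EuclideanSpace ℝ (Fin n) → ℝ) (hdiff : Differentiable ℝ f)
    (x w : EuclideanSpace ℝ (Fin n)) (s : ℝ) :
    HasDerivAt (fun s : ℝ => f (x + s • w)) ⟪gradient f (x + s • w), w⟫ s := by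
  have hc : HasDerivAt (fun s : ℝ => x + s • w) w s := by
    simpa using ((hasDerivAt_id s).smul_const w).const_add x
  have hf := ((hdiff (x + s • w)).hasGradientAt).hasFDerivAt
  have := hf.comp_hasDerivAt s hc
  simpa [InnerProductSpace.toDual_apply_apply, Function.comp_def] using this

/-- Descent lemma with tight constant. -/
lemma descent_lemma (f : EuclideanSpace ℝ (Fin n) → ℝ) (L : ℝ) (hL : 0 < L)
    (hdiff : Differentiable ℝ f)
    (hlip : ∀ x y, ‖gradient f x - gradient f y‖ ≤ L * ‖x - y‖)
    (x w : EuclideanSpace ℝ (Fin n)) :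
    f (x + w) ≤ f x + ⟪gradient f x, w⟫ + L / 2 * ‖w‖ ^ 2 := by
  set h : ℝ → ℝ := fun s => f (x + s • w) - s * ⟪gradient f x, w⟫ - L / 2 * s ^ 2 * ‖w‖ ^ 2
    with hh
  have hderiv : ∀ s : ℝ, HasDerivAt h
      (⟪gradient f (x + s • w), w⟫ - ⟪gradient f x, w⟫ - L * s * ‖w‖ ^ 2) s := by
    intro s
    have h1 := line_hasDerivAt f hdiff x w s
    have h2 : HasDerivAt (fun s : ℝ => s * ⟪gradient f x, w⟫) ⟪gradient f x, w⟫ s := by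
      simpa using (hasDerivAt_id s).mul_const ⟪gradient f x, w⟫
    have h3 : HasDerivAt (fun s : ℝ => L / 2 * s ^ 2 * ‖w‖ ^ 2) (L * s * ‖w‖ ^ 2) s := by
      have := ((hasDerivAt_pow 2 s).const_mul (L / 2)).mul_const (‖w‖ ^ 2)
      exact this.congr_deriv (by push_cast; ring)
    exact (h1.sub h2).sub h3
  have hanti : AntitoneOn h (Set.Icc 0 1) := by
    apply antitoneOn_of_deriv_nonpos (convex_Icc 0 1)
    · exact fun s _ => ((hderiv s).continuousAt).continuousWithinAt
    · exact fun s _ => ((hderiv s).differentiableAt).differentiableWithinAt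
    · intro s hs
      rw [interior_Icc] at hs
      rw [(hderiv s).deriv]
      have hb : ⟪gradient f (x + s • w) - gradient f x, w⟫ ≤ L * s * ‖w‖ ^ 2 := by
        calc ⟪gradient f (x + s • w) - gradient f x, w⟫
            ≤ ‖gradient f (x + s • w) - gradient f x‖ * ‖w‖ := real_inner_le_norm _ _
          _ ≤ (L * ‖(x + s • w) - x‖) * ‖w‖ := by
              apply mul_le_mul_of_nonneg_right (hlip _ _) (norm_nonneg _)
          _ = L * s * ‖w‖ ^ 2 := by
              rw [add_sub_cancel_left, norm_smul]
              simp [abs_of_pos hs.1]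
              ring
      rw [inner_sub_left] at hb
      linarith
  have := hanti (Set.left_mem_Icc.2 zero_le_one) (Set.right_mem_Icc.2 zero_le_one) zero_le_one
  simp only [hh, zero_smul, add_zero, one_smul, zero_mul, one_pow, mul_one, zero_pow,
    sub_zero] at this
  nlinarith [this]

end aux

theorem gradient_descent_strongly_convex_contraction {n : ℕ}
    (f : EuclideanSpace ℝ (Fin n) → ℝ) (L μ t : ℝ)
    (hμ : 0 < μ) (hμL : μ ≤ L) (hdiff : Differentiable ℝ f)
    (hsc : ∀ u v, f v ≥ f u + ⟪gradient f u, v - u⟫ + μ / 2 * ‖v - u‖ ^ 2)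
    (hlip : ∀ x y, ‖gradient f x - gradient f y‖ ≤ L * ‖x - y‖)
    (ht : 0 < t) (ht' : t ≤ 1 / L)
    (ustar : EuclideanSpace ℝ (Fin n)) (hmin : ∀ v, f ustar ≤ f v)
    (u : EuclideanSpace ℝ (Fin n)) :
    ‖u - t • gradient f u - ustar‖ ^ 2 ≤ (1 - t * μ) * ‖u - ustar‖ ^ 2 := by
  have hL : 0 < L := lt_of_lt_of_le hμ hμL
  set g := gradient f u with hg
  -- PL-type inequality: f u - f ustar ≥ 1/(2L) ‖g‖²
  have hPL : f ustar ≤ f u - 1 / (2 * L) * ‖g‖ ^ 2 := by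
    have hdl := descent_lemma f L hL hdiff hlip u (-(1 / L) • g)
    have hmm := hmin (u + -(1 / L) • g)
    rw [inner_smul_right, norm_smul, real_inner_self_eq_norm_sq] at hdl
    simp only [norm_neg, Real.norm_eq_abs] at hdl
    rw [abs_of_pos (by positivity : (0:ℝ) < 1 / L)] at hdl
    have h1 : L / 2 * (1 / L * ‖g‖) ^ 2 = 1 / (2 * L) * ‖g‖ ^ 2 := by
      field_simp
    have h2 : -(1 / L) * ‖g‖ ^ 2 + 1 / (2 * L) * ‖g‖ ^ 2 = -(1 / (2 * L) * ‖g‖ ^ 2) := by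
      field_simp; ring
    rw [hg] at hdl
    linarith
  -- strong convexity at (u, ustar)
  have hstrong := hsc u ustar
  -- expand the squared norm
  have hexp : ‖u - t • g - ustar‖ ^ 2
      = ‖u - ustar‖ ^ 2 - 2 * t * ⟪g, u - ustar⟫ + t ^ 2 * ‖g‖ ^ 2 := by
    have : u - t • g - ustar = (u - ustar) - t • g := by abel
    rw [this, norm_sub_sq_real, real_inner_smul_right, norm_smul, real_inner_comm]
    simp [Real.norm_eq_abs, abs_of_pos ht]
    ring
  rw [hexp]
  have hinner : ⟪g, u - ustar⟫ ≥ 1 / (2 * L) * ‖g‖ ^ 2 + μ / 2 * ‖u - ustar‖ ^ 2 := by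
    have h1 : ⟪g, ustar - u⟫ = -⟪g, u - ustar⟫ := by
      rw [← inner_neg_right]; congr 1; abel
    have h2 : ‖ustar - u‖ = ‖u - ustar‖ := norm_sub_rev _ _
    rw [h1, h2] at hstrong
    linarith
  -- combine: t ≤ 1/L
  have htL : t * L ≤ 1 := (le_div_iff₀ hL).mp ht'
  have hinner2 : ‖g‖ ^ 2 + L * μ * ‖u - ustar‖ ^ 2 ≤ 2 * L * ⟪g, u - ustar⟫ := by
    have h := mul_le_mul_of_nonneg_left hinner (by positivity : (0:ℝ) ≤ 2 * L)
    have key : 2 * L * (1 / (2 * L)) = 1 := by field_simp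
    nlinarith [h]
  have h3 : t * (‖g‖ ^ 2 + L * μ * ‖u - ustar‖ ^ 2) ≤ t * (2 * L * ⟪g, u - ustar⟫) :=
    mul_le_mul_of_nonneg_left hinner2 ht.le
  have h4 : (t * ‖g‖ ^ 2) * (t * L) ≤ (t * ‖g‖ ^ 2) * 1 :=
    mul_le_mul_of_nonneg_left htL (by positivity)
  nlinarith [h3, h4, hL]
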